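/- If X is Lindelöf and projectively Menger, then X is Menger. -/
import Mathlib


def IsMenger (X : Type*) [TopologicalSpace X] : Prop :=
  ∀ U : ℕ → Set (Set X),
    (∀ n, ∀ s ∈ U n, IsOpen s) → (∀ n, ⋃₀ U n = Set.univ) →
    ∃ V : ℕ → Set (Set X), (∀ n, V n ⊆ U n) ∧ (∀ n, (V n).Finite) ∧
      (⋃ n, ⋃₀ V n) = Set.univ

def IsLindelofCover (X : Type*) [TopologicalSpace X] : Prop :=
  ∀ U : Set (Set X), (∀ s ∈ U, IsOpen s) → ⋃₀ U = Set.univ →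
    ∃ V ⊆ U, V.Countable ∧ ⋃₀ V = Set.univ

def ProjectivelyMenger (X : Type*) [TopologicalSpace X] : Prop :=
  ∀ (Z : Type) (_ : TopologicalSpace Z) (_ : SecondCountableTopology Z)
    (f : X → Z), Continuous f → IsMenger (Set.range f)

theorem lindelof_projMenger_implies_menger (X : Type*) [TopologicalSpace X]
    (hL : IsLindelofCover X) (hP : ProjectivelyMenger X) :
    IsMenger X := by
  classical
  intro U hopen hcov
  rcases isEmpty_or_nonempty X with hE | hNE
  · refine ⟨fun _ => ∅, fun n => Set.empty_subset _, fun n => Set.finite_empty, ?_⟩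
    ext x; exact (hE.false x).elim
  -- countable subcovers
  have hcnt : ∀ n, ∃ u : ℕ → Set X, (∀ k, u k ∈ U n) ∧ ⋃ k, u k = Set.univ := by
    intro n
    obtain ⟨V, hVU, hVc, hVcov⟩ := hL (U n) (hopen n) (hcov n)
    have hVne : V.Nonempty := by
      by_contra h
      rw [Set.not_nonempty_iff_eq_empty] at h
      rw [h, Set.sUnion_empty] at hVcov
      exact (hNE.elim fun x => (hVcov ▸ Set.mem_empty_iff_false x).mp (Set.mem_univ x))
    obtain ⟨u, hu⟩ := hVc.exists_eq_range hVne
    refine ⟨u, fun k => hVU (hu ▸ Set.mem_range_self k), ?_⟩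
    rw [← hVcov, hu, Set.sUnion_range]
  choose u hu hucov using hcnt
  -- map into Sierpiński cube
  set f : X → (ℕ × ℕ → Prop) := fun x p => x ∈ u p.1 p.2 with hf
  have hfc : Continuous f := by
    apply continuous_pi
    intro p
    exact continuous_Prop.mpr (hopen p.1 _ (hu p.1 p.2))
  have hM := hP (ℕ × ℕ → Prop) inferInstance inferInstance f hfc
  -- cover of the range
  set W : ℕ → Set (Set (Set.range f)) :=
    fun n => {s | ∃ k, s = {g : Set.range f | g.1 (n, k)}} with hW
  have hWopen : ∀ n, ∀ s ∈ W n, IsOpen s := by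
    rintro n s ⟨k, rfl⟩
    exact continuous_Prop.mp ((continuous_apply (n, k)).comp continuous_subtype_val)
  have hWcov : ∀ n, ⋃₀ W n = Set.univ := by
    intro n
    ext g
    simp only [Set.mem_univ, iff_true, Set.mem_sUnion]
    obtain ⟨x, hx⟩ := g.2
    have : x ∈ ⋃ k, u n k := (hucov n) ▸ Set.mem_univ x
    obtain ⟨k, hk⟩ := Set.mem_iUnion.mp this
    exact ⟨_, ⟨k, rfl⟩, by simpa [hf, ← hx] using hk⟩
  obtain ⟨W', hW'sub, hW'fin, hW'cov⟩ := hM W hWopen hWcov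
  -- pull back
  have key : ∀ n, ∀ t ∈ W' n, ∃ k, t = {g : Set.range f | g.1 (n, k)} :=
    fun n t ht => hW'sub n ht
  set F : ℕ → Set (Set.range f) → Set X := fun n t =>
    if h : ∃ k, t = {g : Set.range f | g.1 (n, k)} then u n h.choose else ∅ with hF
  refine ⟨fun n => F n '' W' n, ?_, fun n => (hW'fin n).image _, ?_⟩
  · rintro n s ⟨t, ht, rfl⟩
    have h := key n t ht
    simp only [hF, dif_pos h]
    exact hu n h.choose
  · ext x
    simp only [Set.mem_univ, iff_true, Set.mem_iUnion, Set.mem_sUnion]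
    have hg : (⟨f x, x, rfl⟩ : Set.range f) ∈ ⋃ n, ⋃₀ W' n := hW'cov ▸ Set.mem_univ _
    obtain ⟨n, t, ht, hgt⟩ := by simpa [Set.mem_iUnion, Set.mem_sUnion] using hg
    have h := key n t ht
    refine ⟨n, F n t, ⟨t, ht, rfl⟩, ?_⟩
    have hspec := h.choose_spec
    rw [hspec] at hgt
    simp only [hF, dif_pos h]
    exact hgt
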